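/- Assume e > -p/2 - n/2 - 1, -p/2 - 1 < a < n/2 + e, and -(n/2+e-a)/(p/2+n/2+e+1) < b < min(n/2+e-a-1, 0). Then for all w > 0, 0 ≤ φ(w) ≤ (p/2+a+1) / (n/2+e-a + b(p/2+n/2+e+1)). -/

import Mathlib

open Real Filter MeasureTheory

/-- The Gauss hypergeometric function `F(α, β; γ; z)`, defined by its power series. -/
noncomputable def hypF (α β γ z : ℝ) : ℝ :=
  ∑' i : ℕ, ((ascPochhammer ℝ i).eval α * (ascPochhammer ℝ i).eval β /
      (ascPochhammer ℝ i).eval γ) * z ^ i / (Nat.factorial i)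


open Set intervalIntegral


noncomputable def poch (α : ℝ) : ℕ → ℝ
  | 0 => 1
  | (n+1) => poch α n * (α + n)

lemma poch_pos {α : ℝ} (hα : 0 < α) (n : ℕ) : 0 < poch α n := by
  induction n with
  | zero => norm_num [poch]
  | succ n ih => exact mul_pos ih (by positivity)

lemma poch_succ (α : ℝ) (n : ℕ) : poch α (n+1) = poch α n * (α + n) := rfl

lemma poch_shift (α : ℝ) (n : ℕ) : poch α (n+1) = α * poch (α+1) n := by
  induction n with
  | zero => simp [poch]
  | succ n ih =>
    rw [poch_succ, ih, poch_succ]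
    push_cast; ring

/-- coefficient of the binomial series -/
noncomputable def bc (α : ℝ) (n : ℕ) : ℝ := poch α n / n.factorial

lemma bc_zero (α : ℝ) : bc α 0 = 1 := by simp [bc, poch]

lemma bc_pos {α : ℝ} (hα : 0 < α) (n : ℕ) : 0 < bc α n :=
  div_pos (poch_pos hα n) (by positivity)

lemma bc_succ (α : ℝ) (n : ℕ) : bc α (n+1) = bc α n * (α + n) / (n+1) := by
  unfold bc
  rw [poch_succ, Nat.factorial_succ]
  have h1 : (n.factorial : ℝ) ≠ 0 := by positivity
  push_cast
  field_simp

lemma summable_bc_mul {α r : ℝ} (hα : 0 < α) (hr0 : 0 ≤ r) (hr : r < 1) :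
    Summable (fun n : ℕ => bc α n * r ^ n) := by
  set r' : ℝ := (1 + r)/2 with hr'def
  have hr'1 : r' < 1 := by rw [hr'def]; linarith
  have hrr' : r < r' := by rw [hr'def]; linarith
  apply summable_of_ratio_norm_eventually_le hr'1
  obtain ⟨N, hN⟩ := exists_nat_gt ((α * r + r')/(r' - r))
  filter_upwards [eventually_ge_atTop N] with n hn
  have hbn : 0 < bc α n := bc_pos hα n
  have hbn1 : 0 < bc α (n+1) := bc_pos hα (n+1)
  rw [Real.norm_eq_abs, Real.norm_eq_abs, abs_of_nonneg (by positivity),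
    abs_of_nonneg (mul_nonneg hbn.le (by positivity)), bc_succ, pow_succ]
  rw [div_mul_eq_mul_div, div_le_iff₀ (by positivity)]
  have hNn : ((α * r + r')/(r' - r)) < n := lt_of_lt_of_le hN (by exact_mod_cast hn)
  have hnr : α * r + r' ≤ n * (r' - r) := by
    rw [div_lt_iff₀ (by linarith)] at hNn
    linarith
  have key : (α + n) * r ≤ r' * (n+1) := by nlinarith [hr0, hrr']
  calc bc α n * (α + n) * (r^n * r) = (bc α n * r^n) * ((α+n)*r) := by ring
    _ ≤ (bc α n * r^n) * (r' * (n+1)) := by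
        apply mul_le_mul_of_nonneg_left key (mul_nonneg hbn.le (by positivity))
    _ = r' * (bc α n * r^n) * (n+1) := by ring




lemma bc_mul_succ (α : ℝ) (n : ℕ) : bc α (n+1) * (n+1) = bc α n * (α + n) := by
  rw [bc_succ]; field_simp

lemma bc_shift (α : ℝ) (n : ℕ) : bc α (n+1) * (n+1) = α * bc (α+1) n := by
  unfold bc
  rw [poch_shift, Nat.factorial_succ]
  have h1 : (n.factorial : ℝ) ≠ 0 := by positivity
  push_cast
  field_simp

lemma hasSum_binomial {α y : ℝ} (hα : 0 < α) (h0 : 0 ≤ y) (h1 : y < 1) :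
    HasSum (fun n : ℕ => bc α n * y ^ n) ((1 - y) ^ (-α)) := by
  rcases eq_or_lt_of_le h0 with rfl | hy
  · have hz : ∀ n : ℕ, n ≠ 0 → bc α n * (0:ℝ) ^ n = 0 := by
      intro n hn
      rw [zero_pow hn, mul_zero]
    have h := hasSum_single (f := fun n : ℕ => bc α n * (0:ℝ) ^ n) 0 hz
    simpa [bc_zero] using h
  -- main case 0 < y < 1
  set r : ℝ := (1 + y)/2 with hrdef
  have hyr : y < r := by rw [hrdef]; linarith
  have hr1 : r < 1 := by rw [hrdef]; linarith
  have hr0 : 0 < r := by rw [hrdef]; linarith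
  set t : Set ℝ := Ioo (-r) r with htdef
  have ht : IsOpen t := isOpen_Ioo
  have h't : IsPreconnected t := (convex_Ioo _ _).isPreconnected
  set g : ℕ → ℝ → ℝ := fun n x => bc α n * x ^ n with hgdef
  set g' : ℕ → ℝ → ℝ := fun n x => bc α n * (n * x ^ (n-1)) with hg'def
  set u : ℕ → ℝ := fun n => bc α n * (n * r ^ (n-1)) with hudef
  have hu : Summable u := by
    rw [← summable_nat_add_iff 1]
    have huu : (fun n : ℕ => u (n + 1)) = fun n : ℕ => α * (bc (α+1) n * r ^ n) := by
      funext n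
      show bc α (n+1) * ((n+1 : ℕ) * r ^ (n+1-1)) = α * (bc (α+1) n * r ^ n)
      rw [Nat.add_sub_cancel]
      have hsh := bc_shift α n
      push_cast at hsh ⊢
      rw [show bc α (n+1) * (((n:ℝ)+1) * r ^ n) = (bc α (n+1) * ((n:ℝ)+1)) * r ^ n from by ring,
        hsh]
      ring
    rw [huu]
    exact (summable_bc_mul (by linarith) hr0.le hr1).mul_left α
  have hg : ∀ (n : ℕ) (x : ℝ), x ∈ t → HasDerivAt (g n) (g' n x) x := by
    intro n x _
    exact (hasDerivAt_pow n x).const_mul (bc α n)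
  have hg'b : ∀ (n : ℕ) (x : ℝ), x ∈ t → ‖g' n x‖ ≤ u n := by
    intro n x hx
    have hxr : |x| ≤ r := by
      rw [abs_le]; exact ⟨hx.1.le, hx.2.le⟩
    have hb := bc_pos hα n
    show ‖bc α n * (n * x ^ (n-1))‖ ≤ bc α n * (n * r ^ (n-1))
    rw [Real.norm_eq_abs, abs_mul, abs_mul, abs_of_nonneg hb.le,
      abs_of_nonneg (by positivity : (0:ℝ) ≤ (n:ℝ)), abs_pow]
    have hp : |x| ^ (n-1) ≤ r ^ (n-1) := pow_le_pow_left₀ (abs_nonneg x) hxr _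
    apply mul_le_mul_of_nonneg_left _ hb.le
    exact mul_le_mul_of_nonneg_left hp (by positivity)
  have h0t : (0:ℝ) ∈ t := ⟨by linarith, hr0⟩
  have hyt : y ∈ t := ⟨by linarith, hyr⟩
  have hg0 : Summable fun n => g n 0 := by
    have := summable_bc_mul hα (le_refl 0) (zero_lt_one)
    simpa [hgdef] using this
  set G : ℝ → ℝ := fun z => ∑' n, g n z with hGdef
  have hD : ∀ x ∈ t, HasDerivAt G (∑' n, g' n x) x :=
    fun x hx => hasDerivAt_tsum_of_isPreconnected hu ht h't hg hg'b h0t hg0 hx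
  have hsumg' : ∀ x ∈ t, Summable fun n => g' n x :=
    fun x hx => Summable.of_norm_bounded hu (fun n => hg'b n x hx)
  -- the ODE : (1-x) * D x = α * G x  for x ∈ t
  have hODE : ∀ x ∈ t, (1 - x) * (∑' n, g' n x) = α * G x := by
    intro x hx
    have hsg' := hsumg' x hx
    have hg'succ : ∀ n : ℕ, g' (n+1) x = bc α (n+1) * ((n+1) * x ^ n) := by
      intro n
      show bc α (n+1) * ((n+1 : ℕ) * x ^ (n+1-1)) = _
      rw [Nat.add_sub_cancel]
      push_cast; ring
    have hxg' : ∀ n : ℕ, x * g' n x = bc α n * ((n:ℝ) * x ^ n) := by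
      intro n
      rcases n with _ | m
      · show x * (bc α 0 * ((0:ℕ) * x ^ (0-1))) = _
        push_cast; ring
      · show x * (bc α (m+1) * ((m+1 : ℕ) * x ^ (m+1-1))) = _
        rw [Nat.add_sub_cancel, pow_succ]
        push_cast; ring
    have hshiftsum : Summable (fun n => bc α (n+1) * ((n+1 : ℝ) * x ^ n)) := by
      have := (summable_nat_add_iff 1).mpr hsg'
      exact this.congr (fun n => by rw [hg'succ n])
    have hxsum : Summable (fun n => bc α n * ((n:ℝ) * x ^ n)) :=
      (hsg'.mul_left x).congr hxg'
    have e1 : x * (∑' n, g' n x) = ∑' n, bc α n * ((n:ℝ) * x ^ n) := by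
      rw [← tsum_mul_left]
      exact tsum_congr hxg'
    have e2 : (∑' n, g' n x) = ∑' n, bc α (n+1) * ((n+1 : ℝ) * x ^ n) := by
      rw [Summable.tsum_eq_zero_add hsg']
      have hz : g' 0 x = 0 := by
        show bc α 0 * ((0:ℕ) * x ^ (0-1)) = 0
        push_cast; ring
      rw [hz, zero_add]
      exact tsum_congr hg'succ
    have e4 : ∀ n : ℕ, bc α (n+1) * ((n+1 : ℝ) * x ^ n) - bc α n * ((n:ℝ) * x ^ n)
        = α * (bc α n * x ^ n) := by
      intro n
      have h := bc_mul_succ α n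
      have : bc α (n+1) * ((n+1:ℝ) * x ^ n) = (bc α (n+1) * ((n:ℝ)+1)) * x ^ n := by
        push_cast; ring
      rw [this]
      push_cast at h
      rw [h]
      ring
    calc (1-x) * (∑' n, g' n x)
        = (∑' n, g' n x) - x * (∑' n, g' n x) := by ring
      _ = (∑' n, bc α (n+1) * ((n+1 : ℝ) * x ^ n)) - ∑' n, bc α n * ((n:ℝ) * x ^ n) := by
          rw [e1, e2]
      _ = ∑' n, (bc α (n+1) * ((n+1 : ℝ) * x ^ n) - bc α n * ((n:ℝ) * x ^ n)) :=
          (Summable.tsum_sub hshiftsum hxsum).symm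
      _ = ∑' n, α * (bc α n * x ^ n) := tsum_congr e4
      _ = α * G x := tsum_mul_left
  -- h := (1-x)^α * G x has zero derivative on t
  have hder : ∀ x ∈ t, HasDerivAt (fun z => (1-z) ^ α * G z) 0 x := by
    intro x hx
    have h1x : 0 < 1 - x := by
      have := hx.2
      simp only [htdef, mem_Ioo] at hx
      linarith [hx.2]
    have dinner : HasDerivAt (fun z : ℝ => 1 - z) (-1) x := by
      simpa using (hasDerivAt_id x).const_sub 1
    have douter := Real.hasDerivAt_rpow_const (x := 1-x) (p := α) (Or.inl (ne_of_gt h1x))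
    have d1 : HasDerivAt (fun z : ℝ => (1-z) ^ α) (α * (1-x) ^ (α-1) * (-1)) x :=
      HasDerivAt.comp x douter dinner
    have d2 := hD x hx
    have dmul := d1.mul d2
    have hval : α * (1-x) ^ (α-1) * (-1) * G x + (1-x) ^ α * (∑' n, g' n x) = 0 := by
      have hrw : (1-x) ^ α = (1-x) ^ (α-1) * (1-x) := by
        rw [← Real.rpow_add_one (ne_of_gt h1x)]
        ring_nf
      rw [hrw]
      linear_combination ((1-x) ^ (α-1)) * (hODE x hx)
    rw [hval] at dmul
    exact dmul
  -- constancy on [0, y]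
  have hsub : Icc (0:ℝ) y ⊆ t := by
    intro z hz
    constructor
    · linarith [hz.1]
    · linarith [hz.2]
  have hconst := constant_of_has_deriv_right_zero
    (f := fun z => (1-z) ^ α * G z) (a := 0) (b := y)
    (fun z hz => ((hder z (hsub hz)).continuousAt).continuousWithinAt)
    (fun z hz => ((hder z (hsub (Ico_subset_Icc_self hz))).hasDerivWithinAt))
  have hval : (1-y) ^ α * G y = (1-0) ^ α * G 0 := hconst y (right_mem_Icc.mpr hy.le)
  have hG0 : G 0 = 1 := by
    have hz : ∀ n : ℕ, n ≠ 0 → g n 0 = 0 := by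
      intro n hn
      show bc α n * (0:ℝ) ^ n = 0
      rw [zero_pow hn, mul_zero]
    have h := hasSum_single (f := fun n => g n 0) 0 hz
    have h1 : (fun n => g n 0) 0 = 1 := by
      show bc α 0 * (0:ℝ) ^ 0 = 1
      rw [bc_zero, pow_zero, mul_one]
    rw [show g 0 0 = 1 from h1] at h
    exact h.tsum_eq
  rw [hG0] at hval
  simp only [sub_zero, Real.one_rpow, mul_one] at hval
  -- hval : (1-y)^α * G y = 1
  have hpow : (0:ℝ) < (1-y) ^ α := Real.rpow_pos_of_pos (by linarith) α
  have hGy : G y = (1-y) ^ (-α) := by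
    rw [Real.rpow_neg (by linarith : (0:ℝ) ≤ 1 - y)]
    field_simp
    linarith [hval]
  have hfin := (summable_bc_mul hα h0 h1).hasSum
  have : (∑' n, bc α n * y ^ n) = G y := rfl
  rwa [this, hGy] at hfin


-- continuity of the basic kernel on Ioo 0 1
lemma contOn_kernel {c β : ℝ} : ContinuousOn (fun l : ℝ => l ^ c * (1 - l) ^ β) (Ioo 0 1) := by
  apply ContinuousOn.mul
  · exact (continuousOn_id).rpow_const (fun x hx => Or.inl (ne_of_gt hx.1))
  · exact ((continuousOn_const).sub continuousOn_id).rpow_const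
      (fun x hx => Or.inl (by intro h; rw [Pi.sub_apply, sub_eq_zero] at h; simp only [id] at h; linarith [hx.2]))

lemma contOn_kernel3 {c β r w : ℝ} (hw : 0 ≤ w) :
    ContinuousOn (fun l : ℝ => l ^ c * (1 - l) ^ β * (1 + w * l) ^ r) (Ioo 0 1) := by
  apply ContinuousOn.mul contOn_kernel
  apply ContinuousOn.rpow_const
  · exact (continuousOn_const).add (continuousOn_const.mul continuousOn_id)
  · intro x hx
    left
    have : 0 < 1 + w * x := by nlinarith [hx.1, hx.2]
    exact ne_of_gt this

-- integrability of the beta kernel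
lemma integrableOn_kernel {c β : ℝ} (hc : -1 < c) (hβ : -1 < β) :
    IntegrableOn (fun l : ℝ => l ^ c * (1 - l) ^ β) (Ioo 0 1) := by
  have h := Complex.betaIntegral_convergent (u := (c+1 : ℂ)) (v := (β+1 : ℂ))
    (by simp; linarith) (by simp; linarith)
  have h2 := h.norm
  have h3 : IntegrableOn (fun x : ℝ => ‖(x:ℂ) ^ ((c:ℂ)+1-1) * (1 - (x:ℂ)) ^ ((β:ℂ)+1-1)‖)
      (Ioo 0 1) := by
    have := (intervalIntegrable_iff_integrableOn_Ioc_of_le (by norm_num : (0:ℝ) ≤ 1)).mp h2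
    exact this.mono_set Ioo_subset_Ioc_self
  apply h3.congr_fun _ measurableSet_Ioo
  intro x hx
  have hx0 : 0 < x := hx.1
  have hx1 : 0 < 1 - x := by linarith [hx.2]
  simp only [norm_mul]
  have e1 : (c:ℂ)+1-1 = (c:ℂ) := by ring
  have e2 : (β:ℂ)+1-1 = (β:ℂ) := by ring
  rw [e1, e2]
  have a1 : ‖(x:ℂ) ^ (c:ℂ)‖ = x ^ c := by
    rw [Complex.norm_cpow_eq_rpow_re_of_pos hx0]
    simp
  have a2 : ‖(1 - (x:ℂ)) ^ (β:ℂ)‖ = (1-x) ^ β := by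
    have : (1 - (x:ℂ)) = ((1 - x : ℝ) : ℂ) := by push_cast; ring
    rw [this, Complex.norm_cpow_eq_rpow_re_of_pos hx1]
    simp
  rw [a1, a2]

lemma integrableOn_kernel3 {c β r w : ℝ} (hc : -1 < c) (hβ : -1 < β) (hw : 0 ≤ w) :
    IntegrableOn (fun l : ℝ => l ^ c * (1 - l) ^ β * (1 + w * l) ^ r) (Ioo 0 1) := by
  set M : ℝ := max 1 ((1 + w) ^ r) with hM
  have hM0 : 0 < M := lt_of_lt_of_le one_pos (le_max_left _ _)
  apply Integrable.mono' ((integrableOn_kernel hc hβ).const_mul M)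
    ((contOn_kernel3 hw).aestronglyMeasurable measurableSet_Ioo)
  rw [ae_restrict_iff' measurableSet_Ioo]
  apply ae_of_all
  intro l hl
  have hl0 : 0 < l := hl.1
  have hl1 : 0 < 1 - l := by linarith [hl.2]
  have hb : 0 < 1 + w * l := by nlinarith
  have hfin : (1 + w * l) ^ r ≤ M := by
    rcases le_or_gt 0 r with hr | hr
    · apply le_trans _ (le_max_right _ _)
      apply Real.rpow_le_rpow hb.le _ hr
      nlinarith [hl.2]
    · apply le_trans _ (le_max_left _ _)
      apply Real.rpow_le_one_of_one_le_of_nonpos (by nlinarith) hr.le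
  have hk : 0 ≤ l ^ c * (1 - l) ^ β := by positivity
  rw [Real.norm_eq_abs, abs_of_nonneg (by positivity)]
  calc l ^ c * (1 - l) ^ β * (1 + w * l) ^ r ≤ l ^ c * (1 - l) ^ β * M :=
        mul_le_mul_of_nonneg_left hfin hk
    _ = M * (l ^ c * (1 - l) ^ β) := by ring

lemma integral_kernel_pos {c β r w : ℝ} (hc : -1 < c) (hβ : -1 < β) (hw : 0 ≤ w) :
    0 < ∫ l in Ioo (0:ℝ) 1, l ^ c * (1 - l) ^ β * (1 + w * l) ^ r := by
  have hInt := integrableOn_kernel3 hc hβ hw (r := r)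
  rw [← integral_Ioc_eq_integral_Ioo, ← intervalIntegral.integral_of_le (by norm_num : (0:ℝ) ≤ 1)]
  apply intervalIntegral_pos_of_pos_on
  · rw [intervalIntegrable_iff_integrableOn_Ioc_of_le (by norm_num),
      integrableOn_Ioc_iff_integrableOn_Ioo]
    exact hInt
  · intro x hx
    have h1 : 0 < 1 - x := by linarith [hx.2]
    have h2 : 0 < 1 + w * x := by nlinarith [hx.1]
    have := hx.1
    positivity
  · norm_num

-- Beta recurrence
lemma beta_rec {c y : ℝ} (hc : -1 < c) (hy : 0 < y) :
    y * ∫ l in Ioo (0:ℝ) 1, l ^ c * (1 - l) ^ (y - 1)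
      = (c + 1 + y) * ∫ l in Ioo (0:ℝ) 1, l ^ c * (1 - l) ^ y := by
  have hx : (0:ℝ) < c + 1 := by linarith
  set x : ℝ := c + 1 with hxdef
  -- IBP : ∫ F' = 0 where F l = l^x (1-l)^y
  set F : ℝ → ℝ := fun l => l ^ x * (1 - l) ^ y with hF
  set F' : ℝ → ℝ := fun l => x * (l ^ c * (1 - l) ^ y) - y * (l ^ x * (1 - l) ^ (y - 1))
    with hF'
  have contrpow : ∀ q : ℝ, 0 ≤ q → Continuous (fun l : ℝ => l ^ q) := by
    intro q hq
    exact continuous_iff_continuousAt.mpr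
      (fun l => Real.continuousAt_rpow_const l q (Or.inr hq))
  have hcont : ContinuousOn F (Icc 0 1) := by
    apply Continuous.continuousOn
    exact (contrpow x hx.le).mul ((contrpow y hy.le).comp (continuous_const.sub continuous_id))
  have hderiv : ∀ l ∈ Ioo (0:ℝ) 1, HasDerivWithinAt F (F' l) (Ioi l) l := by
    intro l hl
    have hl0 : 0 < l := hl.1
    have hl1 : 0 < 1 - l := by linarith [hl.2]
    have d1 : HasDerivAt (fun z : ℝ => z ^ x) (x * l ^ (x - 1)) l :=
      Real.hasDerivAt_rpow_const (Or.inl (ne_of_gt hl0))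
    have dinner : HasDerivAt (fun z : ℝ => 1 - z) (-1) l := by
      simpa using (hasDerivAt_id l).const_sub 1
    have douter := Real.hasDerivAt_rpow_const (x := 1 - l) (p := y) (Or.inl (ne_of_gt hl1))
    have d2 : HasDerivAt (fun z : ℝ => (1 - z) ^ y) (y * (1 - l) ^ (y - 1) * (-1)) l :=
      HasDerivAt.comp l douter dinner
    have dmul := d1.mul d2
    have : HasDerivAt F (F' l) l := by
      refine HasDerivAt.congr_deriv dmul ?_
      rw [hF', hxdef]
      rw [show c + 1 - 1 = c from by ring]
      ring
    exact this.hasDerivWithinAt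
  have hFint : IntervalIntegrable F' MeasureTheory.volume 0 1 := by
    rw [intervalIntegrable_iff_integrableOn_Ioc_of_le (by norm_num),
      integrableOn_Ioc_iff_integrableOn_Ioo]
    have i1 : IntegrableOn (fun l : ℝ => l ^ c * (1 - l) ^ y) (Ioo 0 1) :=
      integrableOn_kernel hc (by linarith)
    have i2 : IntegrableOn (fun l : ℝ => l ^ x * (1 - l) ^ (y - 1)) (Ioo 0 1) :=
      integrableOn_kernel (by linarith) (by linarith)
    exact (i1.const_mul x).sub (i2.const_mul y)
  have hIBP := intervalIntegral.integral_eq_sub_of_hasDeriv_right_of_le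
    (by norm_num : (0:ℝ) ≤ 1) hcont hderiv hFint
  have hF1 : F 1 = 0 := by
    rw [hF]
    simp only [sub_self]
    rw [Real.zero_rpow (ne_of_gt hy), mul_zero]
  have hF0 : F 0 = 0 := by
    rw [hF]
    simp only
    rw [Real.zero_rpow (ne_of_gt hx), zero_mul]
  rw [hF1, hF0, sub_zero] at hIBP
  -- hIBP : ∫ 0..1 F' = 0
  have i1 : IntegrableOn (fun l : ℝ => l ^ c * (1 - l) ^ y) (Ioo 0 1) :=
    integrableOn_kernel hc (by linarith)
  have i2 : IntegrableOn (fun l : ℝ => l ^ x * (1 - l) ^ (y - 1)) (Ioo 0 1) :=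
    integrableOn_kernel (by linarith) (by linarith)
  have hsplit : (∫ l in (0:ℝ)..1, F' l)
      = x * (∫ l in Ioo (0:ℝ) 1, l ^ c * (1 - l) ^ y)
        - y * (∫ l in Ioo (0:ℝ) 1, l ^ x * (1 - l) ^ (y - 1)) := by
    rw [intervalIntegral.integral_of_le (by norm_num : (0:ℝ) ≤ 1),
      integral_Ioc_eq_integral_Ioo]
    rw [MeasureTheory.integral_sub ((i1.const_mul x)) ((i2.const_mul y))]
    rw [MeasureTheory.integral_const_mul, MeasureTheory.integral_const_mul]
  rw [hsplit] at hIBP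
  -- identity : ∫ l^c (1-l)^{y-1} = ∫ l^c (1-l)^y + ∫ l^x (1-l)^{y-1}
  have hsum : (∫ l in Ioo (0:ℝ) 1, l ^ c * (1 - l) ^ (y - 1))
      = (∫ l in Ioo (0:ℝ) 1, l ^ c * (1 - l) ^ y)
        + (∫ l in Ioo (0:ℝ) 1, l ^ x * (1 - l) ^ (y - 1)) := by
    rw [← MeasureTheory.integral_add i1 i2]
    apply setIntegral_congr_fun measurableSet_Ioo
    intro l hl
    have hl0 : 0 < l := hl.1
    have hl1 : 0 < 1 - l := by linarith [hl.2]
    have e1 : (1 - l) ^ y = (1 - l) ^ (y - 1) * (1 - l) := by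
      rw [← Real.rpow_add_one (ne_of_gt hl1) (y - 1)]
      ring_nf
    have e2 : l ^ x = l ^ c * l := by
      rw [hxdef, ← Real.rpow_add_one (ne_of_gt hl0) c]
    simp only
    rw [e1, e2]
    ring
  rw [hsum]
  -- from hIBP : x * I1 = y * I2
  nlinarith [hIBP]




lemma bet_nonneg {c β : ℝ} : 0 ≤ ∫ l in Ioo (0:ℝ) 1, l ^ c * (1 - l) ^ β := by
  apply setIntegral_nonneg measurableSet_Ioo
  intro l hl
  have h1 : (0:ℝ) ≤ l := hl.1.le
  have h2 : (0:ℝ) ≤ 1 - l := by linarith [hl.2]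
  positivity

lemma bet_le {c b : ℝ} (hc : -1 < c) (hb : -1 < b) (i : ℕ) :
    (∫ l in Ioo (0:ℝ) 1, l ^ c * (1 - l) ^ (b + i))
      ≤ ∫ l in Ioo (0:ℝ) 1, l ^ c * (1 - l) ^ b := by
  apply setIntegral_mono_on
    (integrableOn_kernel hc (by linarith [Nat.cast_nonneg (α := ℝ) i]))
    (integrableOn_kernel hc hb) measurableSet_Ioo
  intro l hl
  have h1 : (0:ℝ) < l := hl.1
  have h2 : (0:ℝ) < 1 - l := by linarith [hl.2]
  apply mul_le_mul_of_nonneg_left _ (Real.rpow_nonneg h1.le c)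
  apply Real.rpow_le_rpow_of_exponent_ge h2 (by linarith [hl.1])
  linarith [Nat.cast_nonneg (α := ℝ) i]

lemma summable_terms {c b α v : ℝ} (hc : -1 < c) (hb : -1 < b) (hα : 0 < α)
    (hv0 : 0 ≤ v) (hv1 : v < 1) :
    Summable (fun i : ℕ => bc α i * v ^ i * (∫ l in Ioo (0:ℝ) 1, l ^ c * (1 - l) ^ (b + i))) := by
  apply Summable.of_nonneg_of_le
    (fun i => mul_nonneg (mul_nonneg (bc_pos hα i).le (by positivity)) bet_nonneg)
    (fun i => ?_)
    (((summable_bc_mul hα hv0 hv1).mul_right (∫ l in Ioo (0:ℝ) 1, l ^ c * (1 - l) ^ b)))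
  exact mul_le_mul_of_nonneg_left (bet_le hc hb i)
    (mul_nonneg (bc_pos hα i).le (by positivity))

lemma series_rep {c b w α : ℝ} (hc : -1 < c) (hb1 : -1 < b) (hw : 0 < w) (hα : 0 < α) :
    (∫ l in Ioo (0:ℝ) 1, l ^ c * (1 - l) ^ b * (1 + w * l) ^ (-α))
      = (1 + w) ^ (-α) * ∑' i : ℕ, bc α i * (w/(1+w)) ^ i
          * (∫ l in Ioo (0:ℝ) 1, l ^ c * (1 - l) ^ (b + i)) := by
  have h1w : (0:ℝ) < 1 + w := by linarith
  set v : ℝ := w / (1 + w) with hvdef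
  have hv0 : 0 < v := div_pos hw h1w
  have hv1 : v < 1 := by rw [hvdef, div_lt_one h1w]; linarith
  set f : ℕ → ℝ → ℝ := fun i l => ((1 + w) ^ (-α) * (bc α i * v ^ i)) * (l ^ c * (1 - l) ^ (b + i))
    with hfdef
  have hbi : ∀ i : ℕ, (-1:ℝ) < b + i := fun i => by linarith [Nat.cast_nonneg (α := ℝ) i]
  -- pointwise expansion on Ioo
  have hpt : ∀ l ∈ Ioo (0:ℝ) 1, l ^ c * (1 - l) ^ b * (1 + w * l) ^ (-α) = ∑' i, f i l := by
    intro l hl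
    have hl0 : 0 < l := hl.1
    have hl1 : 0 < 1 - l := by linarith [hl.2]
    set y : ℝ := v * (1 - l) with hydef
    have hy0 : 0 ≤ y := by positivity
    have hy1 : y < 1 := by
      have h2 : 1 - l < 1 := by linarith
      calc y ≤ v * 1 := mul_le_mul_of_nonneg_left (by linarith) hv0.le
        _ < 1 := by linarith
    have hbase : 1 + w * l = (1 + w) * (1 - y) := by
      rw [hydef, hvdef]
      field_simp
      ring
    have hsplit : (1 + w * l) ^ (-α) = (1 + w) ^ (-α) * (1 - y) ^ (-α) := by
      rw [hbase, Real.mul_rpow h1w.le (by linarith)]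
    have hbin := (hasSum_binomial hα hy0 hy1).mul_left (l ^ c * (1 - l) ^ b * (1 + w) ^ (-α))
    have hterm : (fun i : ℕ => l ^ c * (1 - l) ^ b * (1 + w) ^ (-α) * (bc α i * y ^ i))
        = fun i => f i l := by
      funext i
      have e : (1 - l) ^ b * (1 - l) ^ (i:ℕ) = (1 - l) ^ (b + (i:ℝ)) := by
        rw [← Real.rpow_natCast (1-l) i, ← Real.rpow_add hl1]
      calc l ^ c * (1 - l) ^ b * (1 + w) ^ (-α) * (bc α i * y ^ i)
          = ((1 + w) ^ (-α) * (bc α i * v ^ i)) * (l ^ c * ((1 - l) ^ b * (1 - l) ^ (i:ℕ))) := by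
            rw [hydef, mul_pow]; ring
        _ = f i l := by rw [e]
    rw [hterm] at hbin
    rw [hsplit, show l ^ c * (1 - l) ^ b * ((1 + w) ^ (-α) * (1 - y) ^ (-α))
      = (l ^ c * (1 - l) ^ b * (1 + w) ^ (-α)) * ((1 - y) ^ (-α)) from by ring]
    exact hbin.tsum_eq.symm
  rw [setIntegral_congr_fun measurableSet_Ioo hpt]
  -- swap integral and sum
  have hmeas : ∀ i : ℕ, AEStronglyMeasurable (f i) (volume.restrict (Ioo (0:ℝ) 1)) := fun i =>
    (contOn_kernel.aestronglyMeasurable measurableSet_Ioo).const_mul _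
  have hint : ∀ i : ℕ, IntegrableOn (f i) (Ioo (0:ℝ) 1) := fun i =>
    (integrableOn_kernel hc (hbi i)).const_mul _
  have hCnn : ∀ i : ℕ, 0 ≤ (1 + w) ^ (-α) * (bc α i * v ^ i) := fun i =>
    mul_nonneg (Real.rpow_nonneg h1w.le _) (mul_nonneg (bc_pos hα i).le (by positivity))
  have hnn : ∀ i : ℕ, 0 ≤ᵐ[volume.restrict (Ioo (0:ℝ) 1)] f i := by
    intro i
    have h : ∀ᵐ l ∂(volume.restrict (Ioo (0:ℝ) 1)), 0 ≤ f i l := by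
      rw [ae_restrict_iff' measurableSet_Ioo]
      apply ae_of_all
      intro l hl
      have h1 : (0:ℝ) ≤ l := hl.1.le
      have h2 : (0:ℝ) ≤ 1 - l := by linarith [hl.2]
      have := hCnn i
      have hk : 0 ≤ l ^ c * (1 - l) ^ (b + i) := by positivity
      exact mul_nonneg this hk
    exact h
  have hIeq : ∀ i : ℕ, (∫ l in Ioo (0:ℝ) 1, f i l)
      = (1 + w) ^ (-α) * (bc α i * (w/(1+w)) ^ i * (∫ l in Ioo (0:ℝ) 1, l ^ c * (1 - l) ^ (b + i))) := by
    intro i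
    rw [hfdef]
    simp only
    rw [MeasureTheory.integral_const_mul]
    ring
  have hsumI : Summable (fun i : ℕ => ∫ l in Ioo (0:ℝ) 1, f i l) := by
    apply Summable.congr (((summable_terms hc hb1 hα hv0.le hv1).mul_left ((1 + w) ^ (-α))))
    intro i
    rw [hIeq i]
  have hne : (∑' i : ℕ, ∫⁻ l in Ioo (0:ℝ) 1, ‖f i l‖₊) ≠ ⊤ := by
    have heq : ∀ i : ℕ, (∫⁻ l in Ioo (0:ℝ) 1, ‖f i l‖₊)
        = ENNReal.ofReal (∫ l in Ioo (0:ℝ) 1, f i l) := by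
      intro i
      calc (∫⁻ l in Ioo (0:ℝ) 1, ‖f i l‖₊)
          = ∫⁻ l in Ioo (0:ℝ) 1, ENNReal.ofReal (f i l) := by
            apply lintegral_congr_ae
            filter_upwards [hnn i] with l hl
            exact Real.enorm_eq_ofReal hl
        _ = ENNReal.ofReal (∫ l in Ioo (0:ℝ) 1, f i l) :=
            (ofReal_integral_eq_lintegral_ofReal (hint i) (hnn i)).symm
    rw [tsum_congr heq,
      ← ENNReal.ofReal_tsum_of_nonneg (fun i => integral_nonneg_of_ae (hnn i)) hsumI]
    exact ENNReal.ofReal_ne_top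
  rw [MeasureTheory.integral_tsum hmeas hne, tsum_congr hIeq, tsum_mul_left]




lemma main_ineq {c b m w : ℝ} (hc : -1 < c) (hb1 : -1 < b) (hb0 : b ≤ 0)
    (hbm : 1 + b < m) (hm : 0 < m) (hD : 0 < m + b * (c + m + 1)) (hw : 0 < w) :
    (m + b * (c + m + 1)) *
        (∫ l in Ioo (0:ℝ) 1, l ^ c * (1 - l) ^ b * (1 + w * l) ^ (-(c + m + 1)))
      ≤ (1 + b) * (c + m + 1) *
        (∫ l in Ioo (0:ℝ) 1, l ^ c * (1 - l) ^ b * (1 + w * l) ^ (-(c + m + 2))) := by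
  have h1w : (0:ℝ) < 1 + w := by linarith
  have hs1 : (0:ℝ) < c + m + 1 := by linarith
  have hs2 : (0:ℝ) < c + m + 2 := by linarith
  set v : ℝ := w / (1 + w) with hvdef
  have hv0 : 0 < v := div_pos hw h1w
  have hv1 : v < 1 := by rw [hvdef, div_lt_one h1w]; linarith
  set D : ℝ := m + b * (c + m + 1) with hDdef
  set Bet : ℕ → ℝ := fun i => ∫ l in Ioo (0:ℝ) 1, l ^ c * (1 - l) ^ (b + i) with hBet
  set P : ℕ → ℝ := fun i => bc (c+m+2) i * v ^ i * Bet i with hP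
  set q : ℕ → ℝ := fun i => bc (c+m+1) i * v ^ i * Bet i with hq
  have hPsum : Summable P := summable_terms hc hb1 hs2 hv0.le hv1
  have hqsum : Summable q := summable_terms hc hb1 hs1 hv0.le hv1
  set X : ℕ → ℝ := fun i => ((1+b)*(c+m+1)) * P i - D * q i with hX
  have hXsum : Summable X := (hPsum.mul_left _).sub (hqsum.mul_left _)
  have hX1sum : Summable (fun i => X (i+1)) := (summable_nat_add_iff 1).mpr hXsum
  have hYsum : Summable (fun i => ((1+b)*(c+m+1)) * (v * P i)) :=
    (hPsum.mul_left v).mul_left _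
  -- the key termwise inequality
  have key : ∀ i : ℕ, ((1+b)*(c+m+1)) * (v * P i) ≤ X (i+1) := by
    intro i
    have hicast : (0:ℝ) ≤ (i:ℝ) := Nat.cast_nonneg i
    have hbi1 : (0:ℝ) < b + (i:ℝ) + 1 := by linarith
    -- beta recurrence
    have hrec : (b + (i:ℝ) + 1) * Bet i = (c + 1 + (b + (i:ℝ) + 1)) * Bet (i+1) := by
      have h := beta_rec hc (y := b + (i:ℝ) + 1) hbi1
      rw [show b + (i:ℝ) + 1 - 1 = b + (i:ℝ) from by ring] at h
      rw [hBet]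
      simp only
      rw [show b + ((i:ℕ)+1 : ℕ) = b + (i:ℝ) + 1 from by push_cast; ring]
      exact h
    have h1 : bc (c+m+2) (i+1) * ((i:ℝ)+1) = bc (c+m+2) i * ((c+m+2) + (i:ℝ)) := by
      have := bc_mul_succ (c+m+2) i
      push_cast at this
      linarith [this]
    have h2 : bc (c+m+1) (i+1) * ((i:ℝ)+1) = (c+m+1) * bc (c+m+2) i := by
      have := bc_shift (c+m+1) i
      rw [show c+m+1+1 = c+m+2 from by ring] at this
      push_cast at this
      linarith [this]
    have hβ0 : 0 < bc (c+m+2) i := bc_pos hs2 i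
    have hB1 : 0 ≤ Bet (i+1) := bet_nonneg
    -- coefficient inequality
    have hcoef : (1+b)*((i:ℝ)+1)*(c + 1 + (b + (i:ℝ) + 1))
        ≤ ((1+b)*((c+m+2) + (i:ℝ)) - D)*(b + (i:ℝ) + 1) := by
      have hprod : (0:ℝ) ≤ (-b) * (i:ℝ) * (c+1) :=
        mul_nonneg (mul_nonneg (by linarith) hicast) (by linarith)
      have hiden : ((1+b)*((c+m+2) + (i:ℝ)) - D)*(b + (i:ℝ) + 1)
          - (1+b)*((i:ℝ)+1)*(c + 1 + (b + (i:ℝ) + 1)) = (-b) * (i:ℝ) * (c+1) := by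
        rw [hDdef]; ring
      linarith [hiden, hprod]
    -- the reduced inequality (†)
    have hdagger : (1+b)*(c+m+1) * bc (c+m+2) i * Bet i
        ≤ ((1+b)*(c+m+1) * bc (c+m+2) (i+1) - D * bc (c+m+1) (i+1)) * Bet (i+1) := by
      apply le_of_mul_le_mul_right _ (show (0:ℝ) < ((i:ℝ)+1)*(b+(i:ℝ)+1) by positivity)
      have eL : (1+b)*(c+m+1) * bc (c+m+2) i * Bet i * (((i:ℝ)+1)*(b+(i:ℝ)+1))
          = ((c+m+1) * bc (c+m+2) i * Bet (i+1))
            * ((1+b)*((i:ℝ)+1)*(c + 1 + (b + (i:ℝ) + 1))) := by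
        calc (1+b)*(c+m+1) * bc (c+m+2) i * Bet i * (((i:ℝ)+1)*(b+(i:ℝ)+1))
            = (1+b)*(c+m+1) * bc (c+m+2) i * ((i:ℝ)+1) * ((b+(i:ℝ)+1) * Bet i) := by ring
          _ = (1+b)*(c+m+1) * bc (c+m+2) i * ((i:ℝ)+1)
              * ((c + 1 + (b + (i:ℝ) + 1)) * Bet (i+1)) := by rw [hrec]
          _ = ((c+m+1) * bc (c+m+2) i * Bet (i+1))
              * ((1+b)*((i:ℝ)+1)*(c + 1 + (b + (i:ℝ) + 1))) := by ring
      have eR : ((1+b)*(c+m+1) * bc (c+m+2) (i+1) - D * bc (c+m+1) (i+1)) * Bet (i+1)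
            * (((i:ℝ)+1)*(b+(i:ℝ)+1))
          = ((c+m+1) * bc (c+m+2) i * Bet (i+1))
            * (((1+b)*((c+m+2) + (i:ℝ)) - D)*(b + (i:ℝ) + 1)) := by
        calc ((1+b)*(c+m+1) * bc (c+m+2) (i+1) - D * bc (c+m+1) (i+1)) * Bet (i+1)
              * (((i:ℝ)+1)*(b+(i:ℝ)+1))
            = ((1+b)*(c+m+1) * (bc (c+m+2) (i+1) * ((i:ℝ)+1))
                - D * (bc (c+m+1) (i+1) * ((i:ℝ)+1))) * Bet (i+1) * (b+(i:ℝ)+1) := by ring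
          _ = ((1+b)*(c+m+1) * (bc (c+m+2) i * ((c+m+2) + (i:ℝ)))
                - D * ((c+m+1) * bc (c+m+2) i)) * Bet (i+1) * (b+(i:ℝ)+1) := by rw [h1, h2]
          _ = ((c+m+1) * bc (c+m+2) i * Bet (i+1))
              * (((1+b)*((c+m+2) + (i:ℝ)) - D)*(b + (i:ℝ) + 1)) := by ring
      rw [eL, eR]
      apply mul_le_mul_of_nonneg_left hcoef
      exact mul_nonneg (mul_nonneg hs1.le hβ0.le) hB1
    -- scale by v^(i+1)
    have hvpow : (0:ℝ) < v ^ i := by positivity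
    calc ((1+b)*(c+m+1)) * (v * P i)
        = ((1+b)*(c+m+1) * bc (c+m+2) i * Bet i) * (v ^ i * v) := by rw [hP]; ring
      _ ≤ (((1+b)*(c+m+1) * bc (c+m+2) (i+1) - D * bc (c+m+1) (i+1)) * Bet (i+1))
            * (v ^ i * v) := by
          apply mul_le_mul_of_nonneg_right hdagger (by positivity)
      _ = X (i+1) := by
          rw [hX, hP, hq]
          simp only
          rw [pow_succ]
          ring
  -- X 0 is nonnegative
  have hX0 : 0 ≤ X 0 := by
    have e : X 0 = (c+1) * Bet 0 := by
      rw [hX, hP, hq, hDdef]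
      simp only
      rw [bc_zero, bc_zero, pow_zero]
      ring
    rw [e]
    exact mul_nonneg (by linarith) bet_nonneg
  -- sum up
  have hsumle : ∑' i, ((1+b)*(c+m+1)) * (v * P i) ≤ ∑' i, X i := by
    calc ∑' i, ((1+b)*(c+m+1)) * (v * P i) ≤ ∑' i, X (i+1) :=
          Summable.tsum_le_tsum key hYsum hX1sum
      _ ≤ X 0 + ∑' i, X (i+1) := by linarith [hX0]
      _ = ∑' i, X i := (Summable.tsum_eq_zero_add hXsum).symm
  have hYts : ∑' i, ((1+b)*(c+m+1)) * (v * P i) = (1+b)*(c+m+1) * (v * ∑' i, P i) := by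
    rw [tsum_mul_left, tsum_mul_left]
  have hXts : ∑' i, X i = (1+b)*(c+m+1) * (∑' i, P i) - D * (∑' i, q i) := by
    rw [hX, Summable.tsum_sub (hPsum.mul_left _) (hqsum.mul_left _), tsum_mul_left, tsum_mul_left]
  rw [hYts, hXts] at hsumle
  -- conclude via series_rep
  rw [series_rep hc hb1 hw hs1, series_rep hc hb1 hw hs2]
  have hK : (0:ℝ) < (1 + w) ^ (-(c+m+1)) := Real.rpow_pos_of_pos h1w _
  have hpow2 : (1 + w) ^ (-(c+m+2)) = (1 + w) ^ (-(c+m+1)) * (1-v) := by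
    rw [show -(c+m+2) = -(c+m+1) + (-1) from by ring, Real.rpow_add h1w,
      Real.rpow_neg_one]
    congr 1
    rw [hvdef]
    field_simp
    ring
  rw [hpow2]
  have hfinal : D * (∑' i, q i) ≤ (1+b)*(c+m+1) * ((1-v) * ∑' i, P i) := by
    nlinarith [hsumle]
  calc D * ((1 + w) ^ (-(c+m+1)) * ∑' i, q i)
      = (1 + w) ^ (-(c+m+1)) * (D * ∑' i, q i) := by ring
    _ ≤ (1 + w) ^ (-(c+m+1)) * ((1+b)*(c+m+1) * ((1-v) * ∑' i, P i)) :=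
        mul_le_mul_of_nonneg_left hfinal hK.le
    _ = (1+b)*(c+m+1) * ((1 + w) ^ (-(c+m+1)) * (1-v) * ∑' i, P i) := by ring


lemma split_identity {c b s w : ℝ} (hc : -1 < c) (hb : -1 < b) (hw : 0 < w) :
    w * ∫ l in Ioo (0:ℝ) 1, l ^ (c+1) * (1 - l) ^ b * (1 + w * l) ^ (-(s+1))
      = (∫ l in Ioo (0:ℝ) 1, l ^ c * (1 - l) ^ b * (1 + w * l) ^ (-s))
        - ∫ l in Ioo (0:ℝ) 1, l ^ c * (1 - l) ^ b * (1 + w * l) ^ (-(s+1)) := by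
  have h1 : IntegrableOn (fun l : ℝ => l ^ c * (1 - l) ^ b * (1 + w * l) ^ (-s)) (Ioo 0 1) :=
    integrableOn_kernel3 hc hb hw.le
  have h2 : IntegrableOn (fun l : ℝ => l ^ c * (1 - l) ^ b * (1 + w * l) ^ (-(s+1))) (Ioo 0 1) :=
    integrableOn_kernel3 hc hb hw.le
  rw [← MeasureTheory.integral_const_mul, ← MeasureTheory.integral_sub h1 h2]
  apply setIntegral_congr_fun measurableSet_Ioo
  intro l hl
  have hl0 : 0 < l := hl.1
  have hwl : 0 < 1 + w * l := by nlinarith [hl.2]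
  have e1 : l ^ (c+1) = l ^ c * l := Real.rpow_add_one (ne_of_gt hl0) c
  have e2 : (1 + w * l) ^ (-s) = (1 + w * l) ^ (-(s+1)) * (1 + w * l) := by
    rw [show -s = -(s+1) + 1 from by ring, Real.rpow_add_one (ne_of_gt hwl)]
  simp only
  rw [e1, e2]
  ring

theorem stmt_13 (p n : ℕ) (hp : 3 ≤ p) (hn : 1 ≤ n) (a b e : ℝ)
    (he : -(p:ℝ)/2 - (n:ℝ)/2 - 1 < e) (ha1 : -(p:ℝ)/2 - 1 < a) (ha2 : a < (n:ℝ)/2 + e)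
    (hb1 : -(((n:ℝ)/2 + e - a) / ((p:ℝ)/2 + (n:ℝ)/2 + e + 1)) < b)
    (hb2 : b < min ((n:ℝ)/2 + e - a - 1) 0) (φ : ℝ → ℝ)
    (hφ : ∀ w > (0:ℝ), φ w =
      w * (∫ l in (0:ℝ)..1, l ^ ((p:ℝ)/2 + a + 1) * (1 - l) ^ b *
            (1 + w * l) ^ (-((p:ℝ)/2 + (n:ℝ)/2 + e + 2))) /
          (∫ l in (0:ℝ)..1, l ^ ((p:ℝ)/2 + a) * (1 - l) ^ b *
            (1 + w * l) ^ (-((p:ℝ)/2 + (n:ℝ)/2 + e + 2)))) :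
    ∀ w > (0:ℝ), 0 ≤ φ w ∧
      φ w ≤ ((p:ℝ)/2 + a + 1) / ((n:ℝ)/2 + e - a + b * ((p:ℝ)/2 + (n:ℝ)/2 + e + 1)) := by
  intro w hw
  have hφw := hφ w hw
  set c : ℝ := (p:ℝ)/2 + a with hcdef
  set m : ℝ := (n:ℝ)/2 + e - a with hmdef
  have hc : (-1:ℝ) < c := by rw [hcdef]; linarith
  have hm0 : 0 < m := by rw [hmdef]; linarith
  have hcm1 : 0 < c + m + 1 := by rw [hcdef, hmdef]; linarith
  have hb2' := lt_min_iff.mp hb2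
  have hb0 : b < 0 := hb2'.2
  have hbm : 1 + b < m := by linarith [hb2'.1]
  have hsum1 : (p:ℝ)/2 + (n:ℝ)/2 + e + 1 = c + m + 1 := by rw [hcdef, hmdef]; ring
  have hb1m : -(m / (c + m + 1)) < b := by
    rw [hmdef]
    rw [hsum1] at hb1
    exact hb1
  have hb1' : (-1:ℝ) < b := by
    have hfrac : m / (c + m + 1) ≤ 1 := by
      rw [div_le_one hcm1]
      rw [hcdef, hmdef]; linarith
    have := neg_le_neg hfrac
    calc (-1:ℝ) ≤ -(m / (c+m+1)) := this
      _ < b := hb1m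
  have hDpos : 0 < m + b * (c + m + 1) := by
    have h2 : -b < m / (c+m+1) := neg_lt.mp hb1m
    have h3 : -b * (c+m+1) < m := (lt_div_iff₀ hcm1).mp h2
    linarith
  -- rewrite exponents
  rw [show -((p:ℝ)/2 + (n:ℝ)/2 + e + 2) = -(c + m + 2) from by rw [hcdef, hmdef]; ring] at hφw
  rw [hsum1]
  -- convert interval integrals to Ioo integrals
  rw [intervalIntegral.integral_of_le (by norm_num : (0:ℝ) ≤ 1),
    intervalIntegral.integral_of_le (by norm_num : (0:ℝ) ≤ 1),
    integral_Ioc_eq_integral_Ioo, integral_Ioc_eq_integral_Ioo] at hφw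
  set A : ℝ := ∫ l in Ioo (0:ℝ) 1, l ^ c * (1 - l) ^ b * (1 + w * l) ^ (-(c + m + 2)) with hAdef
  set I1 : ℝ := ∫ l in Ioo (0:ℝ) 1, l ^ (c+1) * (1 - l) ^ b * (1 + w * l) ^ (-(c + m + 2))
    with hI1def
  have hA : 0 < A := integral_kernel_pos hc hb1' hw.le
  have hI1 : 0 ≤ I1 := by
    rw [hI1def]
    apply setIntegral_nonneg measurableSet_Ioo
    intro l hl
    have h1 : (0:ℝ) ≤ l := hl.1.le
    have h2 : (0:ℝ) ≤ 1 - l := by linarith [hl.2]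
    have h3 : (0:ℝ) ≤ 1 + w * l := by nlinarith
    positivity
  constructor
  · rw [hφw]
    exact div_nonneg (mul_nonneg hw.le hI1) hA.le
  · rw [hφw, div_le_div_iff₀ hA hDpos]
    -- use the splitting identity and the main inequality
    have hsplit := split_identity (s := c + m + 1) hc hb1' hw
    rw [show c + m + 1 + 1 = c + m + 2 from by ring] at hsplit
    set B : ℝ := ∫ l in Ioo (0:ℝ) 1, l ^ c * (1 - l) ^ b * (1 + w * l) ^ (-(c + m + 1))
      with hBdef
    have hcore := main_ineq hc hb1' hb0.le hbm hm0 hDpos hw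
    -- hsplit : w * I1 = B - A ; hcore : (m + b(c+m+1)) * B ≤ (1+b)(c+m+1) * A
    have hgoal : (m + b * (c + m + 1)) * (w * I1) ≤ (c + 1) * A := by
      rw [hsplit]
      have e : (m + b * (c + m + 1)) * (B - A)
          = (m + b * (c + m + 1)) * B - (m + b * (c + m + 1)) * A := by ring
      rw [e]
      nlinarith [hcore]
    linarith [hgoal]
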